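/- Let B be an n×n integer matrix whose last row is (0, …, 0, −m, ℓ) with ℓ, m > 0, q = gcd(ℓ, m), ℓ' = ℓ/q, m' = m/q. Let B̃ be the (n−1)×(n−1) matrix obtained from the first n−1 rows of B by keeping columns 1,…,n−2 and replacing the last two columns b_{n−1}, b_n (restricted to the first n−1 rows) by the single column ℓ'·b_{n−1} + m'·b_n. Then |det B| = q · |det B̃|. -/

import Mathlib

/-- Determinant identity for parametric reduction: if the last row of the `(n+2)×(n+2)`
integer matrix `B` is `(0,…,0,-m,ℓ)` with `ℓ, m > 0`, `q = gcd(ℓ,m)`, `ℓ' = ℓ/q`,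
`m' = m/q`, and `B̃` is obtained from the first `n+1` rows of `B` by keeping the first `n`
columns and replacing the last two columns `b_{n}, b_{n+1}` by the single column
`ℓ'·b_{n} + m'·b_{n+1}`, then `|det B| = q·|det B̃|`. -/
theorem stmt5 (n : ℕ) (ℓ m : ℕ) (hℓ : 0 < ℓ) (hm : 0 < m)
    (q ℓ' m' : ℕ) (hq : q = Nat.gcd ℓ m) (hℓ' : ℓ' = ℓ / q) (hm' : m' = m / q)
    (B : Matrix (Fin (n + 2)) (Fin (n + 2)) ℤ)
    (hlast : ∀ j : Fin (n + 2), B (Fin.last (n + 1)) j =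
      if (j : ℕ) = n then -(m : ℤ) else if (j : ℕ) = n + 1 then (ℓ : ℤ) else 0)
    (Btilde : Matrix (Fin (n + 1)) (Fin (n + 1)) ℤ)
    (hBtilde : ∀ (i : Fin (n + 1)) (j : Fin (n + 1)),
      Btilde i j =
        if h : (j : ℕ) < n then B i.castSucc ⟨j, by omega⟩
        else (ℓ' : ℤ) * B i.castSucc ⟨n, by omega⟩ + (m' : ℤ) * B i.castSucc ⟨n + 1, by omega⟩) :
    B.det.natAbs = q * Btilde.det.natAbs := by
  set p : Fin (n + 2) := ⟨n, by omega⟩ with hp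
  set N : Matrix (Fin (n + 1)) (Fin (n + 1)) ℤ :=
    B.submatrix Fin.castSucc Fin.castSucc with hN
  set u : Fin (n + 1) → ℤ := fun i => B i.castSucc p with hu
  set v : Fin (n + 1) → ℤ := fun i => B i.castSucc (Fin.last (n + 1)) with hv
  set M1 : Matrix (Fin (n + 1)) (Fin (n + 1)) ℤ :=
    N.updateCol (Fin.last n) v with hM1
  have hqℓ : q ∣ ℓ := hq ▸ Nat.gcd_dvd_left ℓ m
  have hqm : q ∣ m := hq ▸ Nat.gcd_dvd_right ℓ m
  have hℓeq : (ℓ : ℤ) = q * ℓ' := by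
    rw [hℓ']; exact_mod_cast (Nat.mul_div_cancel' hqℓ).symm
  have hmeq : (m : ℤ) = q * m' := by
    rw [hm']; exact_mod_cast (Nat.mul_div_cancel' hqm).symm
  have hBt : Btilde = N.updateCol (Fin.last n) ((ℓ' : ℤ) • u + (m' : ℤ) • v) := by
    ext i j
    rw [hBtilde]
    by_cases hj : (j : ℕ) < n
    · have hjne : j ≠ Fin.last n := by
        intro h; rw [h] at hj; simp at hj
      rw [dif_pos hj, Matrix.updateCol_ne hjne]
      have : (⟨(j : ℕ), by omega⟩ : Fin (n + 2)) = j.castSucc := by ext; simp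
      rw [this]; rfl
    · have hjeq : j = Fin.last n := by ext; simp [Fin.last]; omega
      subst hjeq
      rw [dif_neg hj, Matrix.updateCol_self]
      have h1 : (⟨n, by omega⟩ : Fin (n + 2)) = p := rfl
      have h2 : (⟨n + 1, by omega⟩ : Fin (n + 2)) = Fin.last (n + 1) := by ext; simp [Fin.last]
      rw [h1, h2]
      simp [hu, hv, Pi.add_apply, Pi.smul_apply, smul_eq_mul]
  have hNself : N.updateCol (Fin.last n) u = N := by
    ext i j
    by_cases hj : j = Fin.last n
    · subst hj
      rw [Matrix.updateCol_self]
      have : ((Fin.last n).castSucc : Fin (n + 2)) = p := by ext; simp [Fin.last, hp]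
      simp only [hu, hN, Matrix.submatrix_apply, this]
    · rw [Matrix.updateCol_ne hj]
  have hdetBt : Btilde.det = (ℓ' : ℤ) * N.det + (m' : ℤ) * M1.det := by
    rw [hBt, Matrix.det_updateCol_add, Matrix.det_updateCol_smul,
      Matrix.det_updateCol_smul, hNself, hM1]
  have hsub1 : B.submatrix (Fin.last (n + 1)).succAbove (Fin.last (n + 1)).succAbove = N := by
    rw [Fin.succAbove_last]
  have hsub2 : B.submatrix (Fin.last (n + 1)).succAbove p.succAbove = M1 := by
    rw [Fin.succAbove_last]
    ext i j
    simp only [Matrix.submatrix_apply, hM1]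
    by_cases hj : j = Fin.last n
    · subst hj
      rw [Matrix.updateCol_self]
      have : p.succAbove (Fin.last n) = Fin.last (n + 1) := by
        rw [Fin.succAbove]
        have : ¬ ((Fin.last n).castSucc < p) := by
          simp [Fin.lt_def, Fin.last, hp]
        rw [if_neg this]
        ext; simp [Fin.last]
      rw [this]
    · rw [Matrix.updateCol_ne hj]
      have hjn : (j : ℕ) < n := by
        have := j.isLt
        have hne : (j : ℕ) ≠ n := fun h => hj (by ext; simpa [Fin.last])
        omega
      have : p.succAbove j = j.castSucc := by
        rw [Fin.succAbove]
        have : j.castSucc < p := by simp [Fin.lt_def]; omega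
        rw [if_pos this]
      rw [this]
      rfl
  have hdetB : B.det = (m : ℤ) * M1.det + (ℓ : ℤ) * N.det := by
    rw [Matrix.det_succ_row B (Fin.last (n + 1))]
    have hpair : ({p, Fin.last (n + 1)} : Finset (Fin (n + 2))) ⊆ Finset.univ :=
      Finset.subset_univ _
    rw [← Finset.sum_subset hpair]
    · have hpne : p ≠ Fin.last (n + 1) := by
        intro h
        have := congrArg Fin.val h
        simp [Fin.last, hp] at this
      rw [Finset.sum_pair hpne]
      have h1 : B (Fin.last (n + 1)) p = -(m : ℤ) := by rw [hlast]; simp [hp]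
      have h2 : B (Fin.last (n + 1)) (Fin.last (n + 1)) = (ℓ : ℤ) := by
        rw [hlast]; simp [Fin.last]
      rw [h1, h2, hsub1, hsub2]
      have hval : ((Fin.last (n + 1) : Fin (n + 2)) : ℕ) = n + 1 := rfl
      have hpv : ((p : Fin (n + 2)) : ℕ) = n := rfl
      rw [hval, hpv]
      have hs1 : ((-1 : ℤ)) ^ (n + 1 + n) = -1 := by
        rw [show n + 1 + n = 2 * n + 1 by omega, pow_succ, pow_mul]
        simp
      have hs2 : ((-1 : ℤ)) ^ (n + 1 + (n + 1)) = 1 := by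
        rw [show n + 1 + (n + 1) = 2 * (n + 1) by omega, pow_mul]
        simp
      rw [hs1, hs2]
      ring
    · intro j _ hj
      have hjp : j ≠ p := fun h => hj (by simp [h])
      have hjl : j ≠ Fin.last (n + 1) := fun h => hj (by simp [h])
      have hz : B (Fin.last (n + 1)) j = 0 := by
        rw [hlast]
        have h1 : (j : ℕ) ≠ n := fun h => hjp (by ext; simpa)
        have h2 : (j : ℕ) ≠ n + 1 := fun h => hjl (by ext; simpa [Fin.last])
        rw [if_neg h1, if_neg h2]
      rw [hz]
      ring
  have key : B.det = (q : ℤ) * Btilde.det := by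
    rw [hdetB, hdetBt, hℓeq, hmeq]; ring
  rw [key, Int.natAbs_mul]
  simp
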